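/- Let m be the normalized Haar (Lebesgue) measure on the circle group 𝕋 = ℝ/2πℤ. Let g ∈ L^1(m) with ĝ(k) = 0 for all k < 0, and let h be an essentially bounded measurable function on 𝕋 with ĥ(k) = 0 for all k ≤ 0. Then ∫ h·g dm = 0. -/

import Mathlib

open MeasureTheory Real AddCircle
set_option maxHeartbeats 1000000

instance : Fact (0 < 2 * π) := ⟨by positivity⟩

section helpers

lemma hardy_fourier_arg_add {T : ℝ} (n : ℤ) (x y : AddCircle T) :
    fourier n (x + y) = fourier n x * fourier n y := by
  simp only [fourier_apply, smul_add, toCircle_add, Circle.coe_mul]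

lemma hardy_fourier_neg_neg {T : ℝ} (k : ℤ) (y : AddCircle T) :
    fourier (-k) (-y) = fourier k y := by
  have : (-k) • (-y) = k • y := by rw [neg_smul, smul_neg, neg_neg]
  rw [fourier_apply, this, fourier_apply]

lemma hardy_norm_fourier {T : ℝ} (n : ℤ) (x : AddCircle T) : ‖fourier n x‖ = 1 :=
  Circle.norm_coe _

noncomputable def hardyτ (x : AddCircle (2 * π)) : C(AddCircle (2 * π), AddCircle (2 * π)) :=
  ⟨fun u => u - x, by continuity⟩

lemma hardyτ_cont : Continuous hardyτ :=
  ContinuousMap.continuous_of_continuous_uncurry _ (continuous_snd.sub continuous_fst)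

lemma hardyτ_mp (x : AddCircle (2 * π)) :
    MeasurePreserving (hardyτ x) (haarAddCircle : Measure (AddCircle (2 * π))) haarAddCircle :=
  measurePreserving_sub_right _ x

noncomputable def hardyTrans (gL : Lp ℂ 1 (haarAddCircle : Measure (AddCircle (2 * π))))
    (x : AddCircle (2 * π)) : Lp ℂ 1 (haarAddCircle : Measure (AddCircle (2 * π))) :=
  Lp.compMeasurePreserving (hardyτ x) (hardyτ_mp x) gL

lemma hardyTrans_cont (gL : Lp ℂ 1 (haarAddCircle : Measure (AddCircle (2 * π)))) :
    Continuous (hardyTrans gL) :=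
  Continuous.compMeasurePreservingLp continuous_const hardyτ_cont hardyτ_mp (by norm_num)

/-- The pairing `v ↦ ∫ h v` is continuous on `L¹` when `h` is a.e. bounded. -/
lemma hardy_pairing_cont {h : AddCircle (2 * π) → ℂ} {C : ℝ} (hCnn : 0 ≤ C)
    (hh_meas : AEStronglyMeasurable h (haarAddCircle : Measure (AddCircle (2 * π))))
    (hhC : ∀ᵐ x ∂(haarAddCircle : Measure (AddCircle (2 * π))), ‖h x‖ ≤ C) :
    Continuous fun v : Lp ℂ 1 (haarAddCircle : Measure (AddCircle (2 * π))) =>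
      ∫ u, h u * v u ∂haarAddCircle := by
  refine (LipschitzWith.of_dist_le_mul (K := ⟨C, hCnn⟩) ?_).continuous
  intro v w
  rw [dist_eq_norm, dist_eq_norm]
  have h1 : Integrable (fun u => h u * v u) haarAddCircle :=
    (L1.integrable_coeFn v).bdd_mul hh_meas hhC
  have h2 : Integrable (fun u => h u * w u) haarAddCircle :=
    (L1.integrable_coeFn w).bdd_mul hh_meas hhC
  have hvw : Integrable (fun u => v u - w u) haarAddCircle :=
    (L1.integrable_coeFn v).sub (L1.integrable_coeFn w)
  have key : (∫ u, h u * v u ∂haarAddCircle) - ∫ u, h u * w u ∂haarAddCircle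
      = ∫ u, h u * (v u - w u) ∂haarAddCircle := by
    rw [← integral_sub h1 h2]; congr 1; funext u; ring
  rw [key]
  have hb : ∀ᵐ u ∂(haarAddCircle : Measure (AddCircle (2 * π))),
      ‖h u * (v u - w u)‖ ≤ C * ‖v u - w u‖ := by
    filter_upwards [hhC] with u hu
    rw [norm_mul]
    exact mul_le_mul_of_nonneg_right hu (norm_nonneg _)
  calc ‖∫ u, h u * (v u - w u) ∂haarAddCircle‖
      ≤ ∫ u, C * ‖v u - w u‖ ∂haarAddCircle :=
        norm_integral_le_of_norm_le (hvw.norm.const_mul C) hb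
    _ = C * ∫ u, ‖v u - w u‖ ∂haarAddCircle := integral_const_mul _ _
    _ = C * ‖v - w‖ := by
        congr 1
        rw [L1.norm_eq_integral_norm]
        refine integral_congr_ae ?_
        filter_upwards [Lp.coeFn_sub v w] with u hu
        rw [hu, Pi.sub_apply]

end helpers

/-- If `g ∈ H¹(𝕋)` and `h ∈ H^∞₀(𝕋)` then `∫ h g dm = 0`. -/
theorem integral_mul_eq_zero_of_hardy
    (g h : AddCircle (2 * π) → ℂ)
    (hg_int : Integrable g haarAddCircle)
    (hg : ∀ k : ℤ, k < 0 → fourierCoeff g k = 0)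
    (hh_meas : AEStronglyMeasurable h haarAddCircle)
    (hh_bdd : ∃ C : ℝ, ∀ᵐ x ∂(haarAddCircle : Measure (AddCircle (2 * π))),
      ‖h x‖ ≤ C)
    (hh : ∀ k : ℤ, k ≤ 0 → fourierCoeff h k = 0) :
    ∫ x, h x * g x ∂haarAddCircle = 0 := by
  obtain ⟨C₀, hC₀⟩ := hh_bdd
  set C : ℝ := max C₀ 0 with hCdef
  have hCnn : (0:ℝ) ≤ C := le_max_right _ _
  have hhC : ∀ᵐ x ∂(haarAddCircle : Measure (AddCircle (2 * π))), ‖h x‖ ≤ C := by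
    filter_upwards [hC₀] with x hx
    exact le_trans (by simpa using hx) (le_max_left _ _)
  set ψ : AddCircle (2 * π) → ℂ := fun x => ∫ y, h (x + y) * g y ∂haarAddCircle with hψdef
  -- continuity of ψ
  have hgmem : MemLp g 1 (haarAddCircle : Measure (AddCircle (2 * π))) :=
    memLp_one_iff_integrable.mpr hg_int
  set gL : Lp ℂ 1 (haarAddCircle : Measure (AddCircle (2 * π))) := hgmem.toLp g with hgLdef
  have hψeq : ∀ x, ψ x = ∫ u, h u * (hardyTrans gL x) u ∂haarAddCircle := by
    intro x
    have e1 : ψ x = ∫ u, h u * g (u - x) ∂haarAddCircle :=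
      calc ψ x = ∫ y, h (y + x) * g (y + x - x) ∂haarAddCircle :=
            integral_congr_ae (Filter.Eventually.of_forall fun y => by
              show h (x + y) * g y = h (y + x) * g (y + x - x)
              rw [add_sub_cancel_right, add_comm x y])
        _ = ∫ u, h u * g (u - x) ∂haarAddCircle :=
            integral_add_right_eq_self (μ := (haarAddCircle : Measure (AddCircle (2 * π))))
              (fun u => h u * g (u - x)) x
    rw [e1]
    refine integral_congr_ae ?_
    have h1 := Lp.coeFn_compMeasurePreserving gL (hardyτ_mp x)
    have h2' : ∀ᵐ u ∂(haarAddCircle : Measure (AddCircle (2 * π))),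
        (gL : AddCircle (2 * π) → ℂ) u = g u := hgmem.coeFn_toLp
    have h2 : ∀ᵐ u ∂(haarAddCircle : Measure (AddCircle (2 * π))), gL (u - x) = g (u - x) :=
      (hardyτ_mp x).quasiMeasurePreserving.ae
        (p := fun u => (gL : AddCircle (2 * π) → ℂ) u = g u) h2'
    filter_upwards [h1, h2] with u hu1 hu2
    have : (hardyTrans gL x) u = gL (u - x) := hu1
    rw [this, hu2]
  have hψcont : Continuous ψ :=
    ((hardy_pairing_cont hCnn hh_meas hhC).comp (hardyTrans_cont gL)).congr
      fun x => (hψeq x).symm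
  -- the addition map on the product is quasi measure preserving
  have hquasi : Measure.QuasiMeasurePreserving
      (fun p : AddCircle (2 * π) × AddCircle (2 * π) => p.1 + p.2)
      ((haarAddCircle : Measure (AddCircle (2 * π))).prod haarAddCircle) haarAddCircle :=
    MeasureTheory.QuasiMeasurePreserving.prod_of_right measurable_add
      (Filter.Eventually.of_forall fun x =>
        (measurePreserving_add_left (haarAddCircle : Measure (AddCircle (2 * π)))
          x).quasiMeasurePreserving)
  -- all Fourier coefficients of ψ vanish
  have hψcoeff : ∀ k : ℤ, fourierCoeff ψ k = 0 := by
    intro k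
    have hFmeas : AEStronglyMeasurable
        (fun p : AddCircle (2 * π) × AddCircle (2 * π) =>
          fourier (-k) p.1 * (h (p.1 + p.2) * g p.2))
        ((haarAddCircle : Measure (AddCircle (2 * π))).prod haarAddCircle) := by
      refine AEStronglyMeasurable.mul ?_ (AEStronglyMeasurable.mul ?_ ?_)
      · exact ((map_continuous (fourier (-k))).comp continuous_fst).aestronglyMeasurable
      · exact hh_meas.comp_quasiMeasurePreserving hquasi
      · exact hg_int.aestronglyMeasurable.comp_quasiMeasurePreserving
          Measure.quasiMeasurePreserving_snd
    have hFint : Integrable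
        (fun p : AddCircle (2 * π) × AddCircle (2 * π) =>
          fourier (-k) p.1 * (h (p.1 + p.2) * g p.2))
        ((haarAddCircle : Measure (AddCircle (2 * π))).prod haarAddCircle) := by
      have hGint : Integrable
          (fun p : AddCircle (2 * π) × AddCircle (2 * π) => C * ‖g p.2‖)
          ((haarAddCircle : Measure (AddCircle (2 * π))).prod haarAddCircle) :=
        (integrable_const C).mul_prod hg_int.norm
      refine hGint.mono' hFmeas ?_
      filter_upwards [hquasi.ae hhC] with p hp
      calc ‖fourier (-k) p.1 * (h (p.1 + p.2) * g p.2)‖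
          = ‖h (p.1 + p.2)‖ * ‖g p.2‖ := by
            rw [norm_mul, norm_mul, hardy_norm_fourier, one_mul]
        _ ≤ C * ‖g p.2‖ := mul_le_mul_of_nonneg_right hp (norm_nonneg _)
    have step1 : fourierCoeff ψ k
        = ∫ x, ∫ y, fourier (-k) x * (h (x + y) * g y) ∂haarAddCircle ∂haarAddCircle := by
      refine integral_congr_ae (Filter.Eventually.of_forall fun x => ?_)
      show fourier (-k) x • ψ x = ∫ y, fourier (-k) x * (h (x + y) * g y) ∂haarAddCircle
      rw [smul_eq_mul]
      exact (integral_const_mul _ _).symm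
    have step2 : fourierCoeff ψ k
        = ∫ y, ∫ x, fourier (-k) x * (h (x + y) * g y) ∂haarAddCircle ∂haarAddCircle := by
      rw [step1]
      exact integral_integral_swap hFint
    have inner : ∀ y : AddCircle (2 * π),
        (∫ x, fourier (-k) x * (h (x + y) * g y) ∂haarAddCircle)
          = fourierCoeff h k * (fourier k y * g y) := by
      intro y
      have e2 : (∫ x, fourier (-k) x * h (x + y) ∂haarAddCircle)
          = fourier k y * fourierCoeff h k := by
        have e3 := integral_add_right_eq_self (μ := (haarAddCircle : Measure (AddCircle (2 * π))))
          (fun u => fourier (-k) (u - y) * h u) y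
        have e4 : (∫ x, fourier (-k) x * h (x + y) ∂haarAddCircle)
            = ∫ u, fourier (-k) (u - y) * h u ∂haarAddCircle := by
          rw [← e3]
          refine integral_congr_ae (Filter.Eventually.of_forall fun x => ?_)
          simp only [add_sub_cancel_right]
        rw [e4]
        have e5 : ∀ u : AddCircle (2 * π),
            fourier (-k) (u - y) * h u = fourier k y * (fourier (-k) u * h u) := by
          intro u
          rw [sub_eq_add_neg, hardy_fourier_arg_add, hardy_fourier_neg_neg]
          ring
        simp_rw [e5]
        rw [integral_const_mul]
        congr 1
      calc ∫ x, fourier (-k) x * (h (x + y) * g y) ∂haarAddCircle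
          = (∫ x, fourier (-k) x * h (x + y) ∂haarAddCircle) * g y := by
            rw [← integral_mul_const]
            refine integral_congr_ae (Filter.Eventually.of_forall fun x => ?_)
            ring
        _ = fourierCoeff h k * (fourier k y * g y) := by rw [e2]; ring
    have step3 : fourierCoeff ψ k = fourierCoeff h k * fourierCoeff g (-k) := by
      rw [step2]
      simp_rw [inner]
      rw [integral_const_mul]
      congr 1
      have hcg : fourierCoeff g (-k) = ∫ t, fourier (- -k) t • g t ∂haarAddCircle := rfl
      rw [hcg]
      refine integral_congr_ae (Filter.Eventually.of_forall fun y => ?_)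
      show fourier k y * g y = fourier (- -k) y • g y
      rw [neg_neg, smul_eq_mul]
    rw [step3]
    rcases le_or_gt k 0 with hk | hk
    · rw [hh k hk, zero_mul]
    · rw [hg (-k) (by omega), mul_zero]
  -- ψ is bounded, hence in L², hence 0 in L², hence ≡ 0 by continuity
  have hψbd : ∀ x, ‖ψ x‖ ≤ C * ∫ y, ‖g y‖ ∂haarAddCircle := by
    intro x
    have hb : ∀ᵐ y ∂(haarAddCircle : Measure (AddCircle (2 * π))),
        ‖h (x + y) * g y‖ ≤ C * ‖g y‖ := by
      filter_upwards [(measurePreserving_add_left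
        (haarAddCircle : Measure (AddCircle (2 * π))) x).quasiMeasurePreserving.ae hhC] with y hy
      rw [norm_mul]
      exact mul_le_mul_of_nonneg_right hy (norm_nonneg _)
    calc ‖ψ x‖ ≤ ∫ y, C * ‖g y‖ ∂haarAddCircle :=
          norm_integral_le_of_norm_le (hg_int.norm.const_mul C) hb
      _ = C * ∫ y, ‖g y‖ ∂haarAddCircle := integral_const_mul _ _
  have hψmem : MemLp ψ 2 (haarAddCircle : Measure (AddCircle (2 * π))) :=
    MemLp.of_bound hψcont.aestronglyMeasurable _ (Filter.Eventually.of_forall hψbd)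
  set ψ2 : Lp ℂ 2 (haarAddCircle : Measure (AddCircle (2 * π))) := hψmem.toLp ψ with hψ2def
  have hψ2coeff : ∀ i : ℤ, fourierBasis.repr ψ2 i = 0 := by
    intro i
    rw [fourierBasis_repr]
    have : fourierCoeff (ψ2 : AddCircle (2 * π) → ℂ) i = fourierCoeff ψ i := by
      rw [fourierCoeff, fourierCoeff]
      refine integral_congr_ae ?_
      filter_upwards [hψmem.coeFn_toLp] with t ht
      rw [ht]
    rw [this, hψcoeff]
  have hψ20 : ψ2 = 0 := by
    apply fourierBasis.repr.injective
    rw [map_zero]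
    ext i
    rw [hψ2coeff i]
    rfl
  have hae : ψ =ᵐ[(haarAddCircle : Measure (AddCircle (2 * π)))] fun _ => (0 : ℂ) := by
    have h1 : (ψ2 : AddCircle (2 * π) → ℂ)
        =ᵐ[(haarAddCircle : Measure (AddCircle (2 * π)))] ψ := hψmem.coeFn_toLp
    have h2 : (ψ2 : AddCircle (2 * π) → ℂ)
        =ᵐ[(haarAddCircle : Measure (AddCircle (2 * π)))] fun _ => (0 : ℂ) := by
      rw [hψ20]
      exact Lp.coeFn_zero _ _ _
    exact h1.symm.trans h2
  have hzero : ψ = fun _ => (0 : ℂ) :=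
    Measure.eq_of_ae_eq hae hψcont continuous_const
  have hψ0 : ψ 0 = ∫ x, h x * g x ∂haarAddCircle := by
    show (∫ y, h (0 + y) * g y ∂haarAddCircle) = _
    refine integral_congr_ae (Filter.Eventually.of_forall fun y => ?_)
    show h (0 + y) * g y = h y * g y
    rw [zero_add]
  rw [← hψ0, hzero]
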